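/- Let 𝓜₀ and 𝓜 be covers of a topological space X with 𝓜₀ ⊆ 𝓜, and assume that each M ∈ 𝓜₀ is 𝓜-dense in X, i.e. for every x ∈ X there is M' ∈ 𝓜 such that x ∈ M' and x ∈ closure(M' ∩ M). Then X is strongly functionally generated by 𝓜. -/
import Mathlib


open Set Filter Topology

/-- `X` is strongly functionally generated by a family `𝓜` of subsets if every
discontinuous `f : X → ℝ` has a discontinuous restriction to some `M ∈ 𝓜`. -/
def StronglyFunctionallyGeneratedBy (X : Type*) [TopologicalSpace X] (𝓜 : Set (Set X)) : Prop :=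
  ∀ f : X → ℝ, ¬ Continuous f → ∃ M ∈ 𝓜, ¬ Continuous fun x : M => f x

/-- A subset `A ⊆ X` is `𝓜`-dense if for every `x ∈ X` there is `M ∈ 𝓜` such that
`x ∈ M` and `x ∈ closure (M ∩ A)`. -/
def MDense {X : Type*} [TopologicalSpace X] (𝓜 : Set (Set X)) (A : Set X) : Prop :=
  ∀ x : X, ∃ M ∈ 𝓜, x ∈ M ∧ x ∈ closure (M ∩ A)

theorem stronglyFunctionallyGeneratedBy_of_MDense
    {X : Type*} [TopologicalSpace X] (𝓜₀ 𝓜 : Set (Set X))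
    (hsub : 𝓜₀ ⊆ 𝓜)
    (hcover₀ : ∀ x : X, ∃ M ∈ 𝓜₀, x ∈ M)
    (hcover : ∀ x : X, ∃ M ∈ 𝓜, x ∈ M)
    (hdense : ∀ M ∈ 𝓜₀, MDense 𝓜 M) :
    StronglyFunctionallyGeneratedBy X 𝓜 := by
  intro f hf
  by_contra h
  push_neg at h
  apply hf
  have hM : ∀ M ∈ 𝓜, ContinuousOn f M := fun M hMm =>
    continuousOn_iff_continuous_restrict.mpr (h M hMm)
  rw [continuous_iff_continuousAt]
  intro x
  rw [ContinuousAt, Metric.tendsto_nhds]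
  intro ε hε
  obtain ⟨M₀, hM₀0, hxM₀⟩ := hcover₀ x
  have h₀ : ∀ᶠ z in 𝓝 x, z ∈ M₀ → dist (f z) (f x) < ε / 3 := by
    have := (hM M₀ (hsub hM₀0) x hxM₀)
    rw [ContinuousWithinAt, Metric.tendsto_nhds] at this
    exact eventually_nhdsWithin_iff.mp (this (ε / 3) (by linarith))
  obtain ⟨U, hU, hUopen, hxU⟩ := eventually_nhds_iff.mp h₀
  have key : ∀ y ∈ U, dist (f y) (f x) < ε := by
    intro y hyU
    obtain ⟨M', hM'm, hyM', hycl⟩ := hdense M₀ hM₀0 y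
    have h₁ : ∀ᶠ z in 𝓝 y, z ∈ M' → dist (f z) (f y) < ε / 3 := by
      have := (hM M' hM'm y hyM')
      rw [ContinuousWithinAt, Metric.tendsto_nhds] at this
      exact eventually_nhdsWithin_iff.mp (this (ε / 3) (by linarith))
    have hUy : U ∈ 𝓝 y := hUopen.mem_nhds hyU
    have hmem : ({z | z ∈ M' → dist (f z) (f y) < ε / 3} ∩ U) ∈ 𝓝 y :=
      inter_mem h₁ hUy
    obtain ⟨z, hz1, hz2⟩ := mem_closure_iff_nhds.mp hycl _ hmem
    have hd1 : dist (f z) (f y) < ε / 3 := hz1.1 hz2.1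
    have hd2 : dist (f z) (f x) < ε / 3 := hU z hz1.2 hz2.2
    calc dist (f y) (f x) ≤ dist (f y) (f z) + dist (f z) (f x) := dist_triangle _ _ _
      _ < ε / 3 + ε / 3 := by rw [dist_comm (f y)]; linarith
      _ < ε := by linarith
  filter_upwards [hUopen.mem_nhds hxU] with y hy using key y hy
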